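/- Consider a pDLS instance in which every job has the same deadline D: jobs [n] with processing times p_j ∈ ℕ and penalties w_j ∈ ℕ, and precedence given by a partial order ⪯ on [n]. Then the minimum total penalty over all feasible schedules equals ∑_{j∈[n]} w_j − max{ ∑_{j∈A} w_j : A ⊆ [n], A is downward closed under ⪯, and ∑_{j∈A} p_j ≤ D }. -/
import Mathlib

/-- Type synonym for `J` carrying the "A-first" partial order. -/
def SchedAux (J : Type*) (_A : Finset J) : Type _ := J

def SchedAux.mk {J : Type*} {A : Finset J} (j : J) : SchedAux J A := j
def SchedAux.down {J : Type*} {A : Finset J} (j : SchedAux J A) : J := j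

instance schedAuxPartialOrder {J : Type*} [PartialOrder J] (A : Finset J) :
    PartialOrder (SchedAux J A) where
  le a b := (a.down ∈ A ∧ b.down ∉ A) ∨ ((a.down ∈ A ↔ b.down ∈ A) ∧ a.down ≤ b.down)
  le_refl a := Or.inr ⟨Iff.rfl, le_refl _⟩
  le_trans a b c hab hbc := by
    rcases hab with ⟨ha, hb⟩ | ⟨hiff, hle⟩
    · rcases hbc with ⟨hb', _⟩ | ⟨hiff', hle'⟩
      · exact absurd hb' hb
      · exact Or.inl ⟨ha, fun hc => hb (hiff'.mpr hc)⟩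
    · rcases hbc with ⟨hb', hc⟩ | ⟨hiff', hle'⟩
      · exact Or.inl ⟨hiff.mpr hb', hc⟩
      · exact Or.inr ⟨hiff.trans hiff', hle.trans hle'⟩
  le_antisymm a b hab hba := by
    rcases hab with ⟨ha, hb⟩ | ⟨hiff, hle⟩
    · rcases hba with ⟨hb', _⟩ | ⟨hiff', _⟩
      · exact absurd hb' hb
      · exact absurd (hiff'.mpr ha) hb
    · rcases hba with ⟨hb', ha'⟩ | ⟨_, hle'⟩
      · exact absurd (hiff.mpr hb') ha'
      · exact show a.down = b.down from le_antisymm hle hle'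

lemma schedAux_le_iff {J : Type*} [PartialOrder J] {A : Finset J} (a b : SchedAux J A) :
    a ≤ b ↔ (a.down ∈ A ∧ b.down ∉ A) ∨ ((a.down ∈ A ↔ b.down ∈ A) ∧ a.down ≤ b.down) :=
  Iff.rfl

noncomputable instance {J : Type*} (A : Finset J) [Fintype J] : Fintype (SchedAux J A) :=
  inferInstanceAs (Fintype J)

noncomputable instance {J : Type*} [Fintype J] : Fintype (LinearExtension J) :=
  inferInstanceAs (Fintype J)

lemma exists_schedule {J : Type*} [Fintype J] [PartialOrder J] (A : Finset J)
    (hA : ∀ j ∈ A, ∀ j' : J, j' ≤ j → j' ∈ A) :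
    ∃ σ : J ≃ Fin (Fintype.card J),
      (∀ a b : J, a ≤ b → σ a ≤ σ b) ∧
      (∀ j ∈ A, ∀ j' : J, σ j' ≤ σ j → j' ∈ A) := by
  classical
  let L := LinearExtension (SchedAux J A)
  let e : Fin (Fintype.card J) ≃o L :=
    monoEquivOfFin L (rfl : Fintype.card L = Fintype.card J)
  have haux : ∀ a b : J, a ≤ b → (SchedAux.mk (A := A) a) ≤ SchedAux.mk b := by
    intro a b hab
    by_cases ha : a ∈ A
    · by_cases hb : b ∈ A
      · exact Or.inr ⟨by simp [SchedAux.mk, SchedAux.down, ha, hb], hab⟩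
      · exact Or.inl ⟨ha, hb⟩
    · have hb : b ∉ A := fun hb => ha (hA b hb a hab)
      exact Or.inr ⟨by simp [SchedAux.mk, SchedAux.down, ha, hb], hab⟩
  let f : J → L := fun j => toLinearExtension (SchedAux.mk j)
  have hfinj : Function.Injective f := fun a b h => h
  refine ⟨⟨fun j => e.symm (f j), fun i => SchedAux.down (e i), ?_, ?_⟩, ?_, ?_⟩
  · intro j
    show SchedAux.down (e (e.symm (f j))) = j
    rw [OrderIso.apply_symm_apply]
    rfl
  · intro i
    exact e.symm_apply_apply i
  · intro a b hab
    exact e.symm.monotone (toLinearExtension.monotone (haux a b hab))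
  · intro j hj j' hle
    by_contra hj'
    have h1 : (SchedAux.mk (A := A) j) ≤ SchedAux.mk j' := Or.inl ⟨hj, hj'⟩
    have hne : f j ≠ f j' := fun h => hj' (hfinj h ▸ hj)
    have h2 : f j < f j' := lt_of_le_of_ne (toLinearExtension.monotone h1) hne
    have h3 : e.symm (f j) < e.symm (f j') := e.symm.strictMono h2
    exact absurd (lt_of_lt_of_le h3 hle) (lt_irrefl _)

theorem stmt16 (J : Type*) [Fintype J] [PartialOrder J] [DecidableEq J]
    (p w : J → ℕ) (D : ℕ) :
    sInf {c : ℕ | ∃ σ : J ≃ Fin (Fintype.card J),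
        (∀ a b : J, a ≤ b → σ a ≤ σ b) ∧
        c = ∑ j ∈ Finset.univ.filter
              (fun j : J =>
                D < ∑ j' ∈ Finset.univ.filter (fun j' : J => σ j' ≤ σ j), p j'), w j}
    = (∑ j : J, w j) -
      sSup {v : ℕ | ∃ A : Finset J,
        (∀ j ∈ A, ∀ j' : J, j' ≤ j → j' ∈ A) ∧
        (∑ j ∈ A, p j) ≤ D ∧ v = ∑ j ∈ A, w j} := by
  classical
  set T : Set ℕ := {v : ℕ | ∃ A : Finset J,
        (∀ j ∈ A, ∀ j' : J, j' ≤ j → j' ∈ A) ∧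
        (∑ j ∈ A, p j) ≤ D ∧ v = ∑ j ∈ A, w j} with hTdef
  set S : Set ℕ := {c : ℕ | ∃ σ : J ≃ Fin (Fintype.card J),
        (∀ a b : J, a ≤ b → σ a ≤ σ b) ∧
        c = ∑ j ∈ Finset.univ.filter
              (fun j : J =>
                D < ∑ j' ∈ Finset.univ.filter (fun j' : J => σ j' ≤ σ j), p j'), w j} with hSdef
  have hT0 : (0:ℕ) ∈ T := ⟨∅, by simp, by simp, by simp⟩
  have hTbdd : BddAbove T := by
    refine ⟨∑ j : J, w j, ?_⟩
    rintro v ⟨A, -, -, rfl⟩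
    exact Finset.sum_le_sum_of_subset (Finset.subset_univ A)
  have hsupmem : sSup T ∈ T := Nat.sSup_mem ⟨0, hT0⟩ hTbdd
  obtain ⟨A, hAdc, hAp, hAv⟩ := hsupmem
  obtain ⟨σ₀, hmono₀, hkey₀⟩ := exists_schedule A hAdc
  have hc₀S : (∑ j ∈ Finset.univ.filter
      (fun j : J => D < ∑ j' ∈ Finset.univ.filter (fun j' : J => σ₀ j' ≤ σ₀ j), p j'), w j) ∈ S :=
    ⟨σ₀, hmono₀, rfl⟩
  have hlate : Finset.univ.filter
      (fun j : J => D < ∑ j' ∈ Finset.univ.filter (fun j' : J => σ₀ j' ≤ σ₀ j), p j')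
      ⊆ Finset.univ.filter (fun j => j ∉ A) := by
    intro j hj
    simp only [Finset.mem_filter, Finset.mem_univ, true_and] at hj ⊢
    intro hjA
    have hsub : Finset.univ.filter (fun j' : J => σ₀ j' ≤ σ₀ j) ⊆ A := by
      intro k hk
      simp only [Finset.mem_filter, Finset.mem_univ, true_and] at hk
      exact hkey₀ j hjA k hk
    exact absurd hj (not_lt.mpr (le_trans (Finset.sum_le_sum_of_subset hsub) hAp))
  have hsplit : (∑ j ∈ A, w j) + ∑ j ∈ Finset.univ.filter (fun j => j ∉ A), w j
      = ∑ j : J, w j := by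
    rw [← Finset.sum_filter_add_sum_filter_not Finset.univ (fun j => j ∈ A) w]
    congr 2
    ext j; simp
  have hc₀le : (∑ j ∈ Finset.univ.filter
      (fun j : J => D < ∑ j' ∈ Finset.univ.filter (fun j' : J => σ₀ j' ≤ σ₀ j), p j'), w j)
      ≤ ∑ j : J, w j - sSup T := by
    have h1 := Finset.sum_le_sum_of_subset (f := w) hlate
    omega
  have hlb : ∀ c ∈ S, ∑ j : J, w j - sSup T ≤ c := by
    rintro c ⟨σ, hmono, rfl⟩
    set E := Finset.univ.filter
      (fun j : J => ¬ D < ∑ j' ∈ Finset.univ.filter (fun j' : J => σ j' ≤ σ j), p j') with hE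
    have hEdc : ∀ j ∈ E, ∀ j' : J, j' ≤ j → j' ∈ E := by
      intro j hj j' hle
      simp only [hE, Finset.mem_filter, Finset.mem_univ, true_and, not_lt] at hj ⊢
      have hσ : σ j' ≤ σ j := hmono _ _ hle
      refine le_trans (Finset.sum_le_sum_of_subset ?_) hj
      intro k hk
      simp only [Finset.mem_filter, Finset.mem_univ, true_and] at hk ⊢
      exact le_trans hk hσ
    have hEp : ∑ j ∈ E, p j ≤ D := by
      rcases E.eq_empty_or_nonempty with h | h
      · simp [h]
      · obtain ⟨j₀, hj₀E, hmax⟩ := Finset.exists_max_image E σ h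
        have hj₀ : ∑ j' ∈ Finset.univ.filter (fun j' : J => σ j' ≤ σ j₀), p j' ≤ D := by
          have := hj₀E
          simp only [hE, Finset.mem_filter, Finset.mem_univ, true_and, not_lt] at this
          exact this
        refine le_trans (Finset.sum_le_sum_of_subset ?_) hj₀
        intro k hk
        simp only [Finset.mem_filter, Finset.mem_univ, true_and]
        exact hmax k hk
    have hET : (∑ j ∈ E, w j) ∈ T := ⟨E, hEdc, hEp, rfl⟩
    have hEle : ∑ j ∈ E, w j ≤ sSup T := le_csSup hTbdd hET
    have hsplit2 : (∑ j ∈ Finset.univ.filter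
        (fun j : J => D < ∑ j' ∈ Finset.univ.filter (fun j' : J => σ j' ≤ σ j), p j'), w j)
        + ∑ j ∈ E, w j = ∑ j : J, w j := by
      rw [hE]
      exact Finset.sum_filter_add_sum_filter_not _ _ w
    omega
  exact le_antisymm (le_trans (Nat.sInf_le hc₀S) hc₀le)
    (hlb _ (Nat.sInf_mem ⟨_, hc₀S⟩))
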